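/- Fix an integer k ≥ 1. There exists C < ∞ such that for every λ ∈ (0,1): (i) there exists a function h : ℕ → ℝ with h(x) → 0 as x → ∞ satisfying λ h(x) − (𝒮h)(x) = 1_{x=0} − 1_{x=k} for all x ∈ ℕ; and (ii) every such function satisfies |h(0) − h(k)| ≤ C, with the bound C uniform over λ ∈ (0,1). -/

import Mathlib

open Filter

/-- The generator of the symmetric nearest-neighbor random walk on `ℕ` reflected at `0`. -/
noncomputable def walkGen (f : ℕ → ℝ) : ℕ → ℝ :=
  fun x => if x = 0 then f 1 - f 0 else f (x + 1) + f (x - 1) - 2 * f x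

/-- Explicit resolvent solution: `h(x) = r (r^x + r^{x+1} - r^{|x-k|} - r^{x+k+1}) / (1-r²)`. -/
noncomputable def solH (r : ℝ) (k : ℕ) : ℕ → ℝ := fun x =>
  r * (r ^ x + r ^ (x + 1) - r ^ (x - k) * r ^ (k - x) - r ^ (x + k + 1)) / (1 - r ^ 2)

lemma solH_tendsto (r : ℝ) (k : ℕ) (hr0 : 0 < r) (hr1 : r < 1) :
    Tendsto (solH r k) atTop (nhds 0) := by
  have hrne : r ≠ 0 := ne_of_gt hr0
  have hc : ∀ᶠ x in atTop, (r * (1 + r - (r ^ k)⁻¹ - r ^ (k + 1)) / (1 - r ^ 2)) * r ^ x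
      = solH r k x := by
    filter_upwards [eventually_ge_atTop k] with x hx
    have h1 : r ^ (x - k) = r ^ x / r ^ k := pow_sub₀ r hrne hx
    have h2 : k - x = 0 := by omega
    have h3 : r ^ (x + 1) = r ^ x * r := pow_succ r x
    have h4 : r ^ (x + k + 1) = r ^ x * r ^ (k + 1) := by rw [← pow_add]; ring_nf
    simp only [solH, h1, h2, h3, h4, pow_zero, mul_one]
    field_simp
  refine Tendsto.congr' hc ?_
  have := (tendsto_pow_atTop_nhds_zero_of_lt_one (le_of_lt hr0) hr1).const_mul
    (r * (1 + r - (r ^ k)⁻¹ - r ^ (k + 1)) / (1 - r ^ 2))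
  simpa using this

lemma solH_eq (r lam : ℝ) (k : ℕ) (hk : 1 ≤ k) (hr0 : 0 < r) (hr1 : r < 1)
    (hkey : lam * r = (1 - r) ^ 2) :
    ∀ x : ℕ, lam * solH r k x - walkGen (solH r k) x =
      (if x = 0 then (1 : ℝ) else 0) - (if x = k then (1 : ℝ) else 0) := by
  have hrne : r ≠ 0 := ne_of_gt hr0
  have hs : (1 : ℝ) - r ^ 2 ≠ 0 := by nlinarith
  have hlam : lam = (1 - r) ^ 2 / r := by field_simp at hkey ⊢; linarith [hkey]
  obtain ⟨m, rfl⟩ : ∃ m, k = m + 1 := ⟨k - 1, by omega⟩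
  intro x
  match x with
  | 0 =>
    rw [if_pos rfl, if_neg (by omega)]
    simp only [walkGen, if_pos rfl, solH, ↓reduceIte]
    simp only [show 0 - (m+1) = 0 from by omega, show (m+1) - 0 = m+1 from rfl,
      show 1 - (m+1) = 0 from by omega, show (m+1) - 1 = m from by omega]
    rw [hlam]
    field_simp
    ring
  | (y+1) =>
    have hwg : walkGen (solH r (m+1)) (y+1)
        = solH r (m+1) (y+2) + solH r (m+1) y - 2 * solH r (m+1) (y+1) := by
      simp [walkGen]
    rw [hwg, if_neg (by omega)]
    rcases lt_trichotomy y m with hym | hym | hym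
    · -- 1 ≤ x < k
      obtain ⟨j, rfl⟩ : ∃ j, m = y + j + 1 := ⟨m - y - 1, by omega⟩
      rw [if_neg (by omega)]
      simp only [solH,
        show (y+1) - (y+j+1+1) = 0 from by omega, show (y+j+1+1) - (y+1) = j+1 from by omega,
        show y - (y+j+1+1) = 0 from by omega, show (y+j+1+1) - y = j+2 from by omega,
        show (y+2) - (y+j+1+1) = 0 from by omega, show (y+j+1+1) - (y+2) = j from by omega]
      rw [hlam]
      field_simp
      ring
    · -- x = k
      subst hym
      rw [if_pos rfl]
      simp only [solH,
        show (y+1) - (y+1) = 0 from by omega,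
        show y - (y+1) = 0 from by omega, show (y+1) - y = 1 from by omega,
        show (y+2) - (y+1) = 1 from by omega, show (y+1) - (y+2) = 0 from by omega]
      rw [hlam]
      field_simp
      ring
    · -- x > k
      obtain ⟨i, rfl⟩ : ∃ i, y = m + i + 1 := ⟨y - m - 1, by omega⟩
      rw [if_neg (by omega)]
      simp only [solH,
        show (m+i+1+1) - (m+1) = i+1 from by omega, show (m+1) - (m+i+1+1) = 0 from by omega,
        show (m+i+1) - (m+1) = i from by omega, show (m+1) - (m+i+1) = 0 from by omega,
        show (m+i+1+2) - (m+1) = i+2 from by omega, show (m+1) - (m+i+1+2) = 0 from by omega]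
      rw [hlam]
      field_simp
      ring

lemma solH_bound (r : ℝ) (k : ℕ) (hk : 1 ≤ k) (hr0 : 0 < r) (hr1 : r < 1) :
    |solH r k 0 - solH r k k| ≤ 3 * k := by
  have hrne : r ≠ 0 := ne_of_gt hr0
  have hs : (1 : ℝ) - r ^ 2 ≠ 0 := by nlinarith
  have h1r : (1 : ℝ) + r ≠ 0 := by positivity
  have hgeom : (∑ i ∈ Finset.range k, r ^ i) * (r - 1) = r ^ k - 1 := geom_sum_mul r k
  have hdiff : solH r k 0 - solH r k k =
      (∑ i ∈ Finset.range k, r ^ i) * (r * (2 + r - r ^ (k + 1)) / (1 + r)) := by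
    simp only [solH, show 0 - k = 0 from by omega, show k - 0 = k from rfl,
      show k - k = 0 from by omega, pow_zero, one_mul, mul_one]
    have h2 : r ^ (0 + k + 1) = r ^ (k+1) := by ring_nf
    have h3 : r ^ (k + k + 1) = r ^ k * r ^ k * r := by rw [pow_add, pow_add, pow_one]
    rw [h2, h3]
    field_simp
    linear_combination ((1+r) * (2 + r - r^k * r)) * hgeom
  rw [hdiff]
  have hS0 : (0:ℝ) ≤ ∑ i ∈ Finset.range k, r ^ i := by positivity
  have hSk : (∑ i ∈ Finset.range k, r ^ i) ≤ (k : ℝ) := by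
    calc (∑ i ∈ Finset.range k, r ^ i) ≤ ∑ i ∈ Finset.range k, (1:ℝ) := by
          refine Finset.sum_le_sum fun i _ => ?_
          exact pow_le_one₀ (le_of_lt hr0) (le_of_lt hr1)
      _ = (k : ℝ) := by simp
  have hpk : r ^ (k + 1) ≤ 1 := pow_le_one₀ (le_of_lt hr0) (le_of_lt hr1)
  have hpk0 : 0 ≤ r ^ (k + 1) := by positivity
  have hM0 : 0 ≤ r * (2 + r - r ^ (k + 1)) / (1 + r) := by
    apply div_nonneg _ (by linarith)
    nlinarith
  have hM3 : r * (2 + r - r ^ (k + 1)) / (1 + r) ≤ 3 := by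
    rw [div_le_iff₀ (by linarith)]
    nlinarith
  rw [abs_of_nonneg (mul_nonneg hS0 hM0)]
  calc (∑ i ∈ Finset.range k, r ^ i) * (r * (2 + r - r ^ (k + 1)) / (1 + r))
      ≤ (k : ℝ) * 3 := mul_le_mul hSk hM3 hM0 (Nat.cast_nonneg k)
    _ = 3 * k := by ring

lemma homog_nonpos (lam : ℝ) (hlam : 0 < lam) (d : ℕ → ℝ)
    (hd : Tendsto d atTop (nhds 0))
    (heq : ∀ x, lam * d x - walkGen d x = 0) : ∀ x, d x ≤ 0 := by
  by_contra hcon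
  push_neg at hcon
  obtain ⟨x1, hx1⟩ := hcon
  obtain ⟨N, hN⟩ := (hd.eventually (gt_mem_nhds hx1)).exists_forall_of_atTop
  obtain ⟨x0, hx0mem, hx0max⟩ := (Finset.range (N + 1)).exists_max_image d ⟨0, by simp⟩
  have hx1N : x1 < N + 1 := by
    by_contra h
    exact absurd (hN x1 (by omega)) (lt_irrefl _)
  have hx0pos : 0 < d x0 := lt_of_lt_of_le hx1 (hx0max x1 (Finset.mem_range.mpr hx1N))
  have hx1le : d x1 ≤ d x0 := hx0max x1 (Finset.mem_range.mpr hx1N)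
  have hglob : ∀ y, d y ≤ d x0 := by
    intro y
    rcases lt_or_ge y (N + 1) with hy | hy
    · exact hx0max y (Finset.mem_range.mpr hy)
    · linarith [hN y (by omega)]
  have heq0 := heq x0
  have hpos : 0 < lam * d x0 := mul_pos hlam hx0pos
  unfold walkGen at heq0
  by_cases h0 : x0 = 0
  · subst h0
    rw [if_pos rfl] at heq0
    have := hglob 1
    linarith
  · rw [if_neg h0] at heq0
    have h1 := hglob (x0 + 1)
    have h2 := hglob (x0 - 1)
    linarith

lemma homog_zero (lam : ℝ) (hlam : 0 < lam) (d : ℕ → ℝ)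
    (hd : Tendsto d atTop (nhds 0))
    (heq : ∀ x, lam * d x - walkGen d x = 0) : ∀ x, d x = 0 := by
  have h1 := homog_nonpos lam hlam d hd heq
  have heq' : ∀ x, lam * (-d x) - walkGen (fun y => -d y) x = 0 := by
    intro x
    have := heq x
    unfold walkGen at this ⊢
    split_ifs at this ⊢ <;> ring_nf <;> ring_nf at this <;> linarith
  have h2 := homog_nonpos lam hlam (fun y => -d y) (by simpa using hd.neg) heq'
  intro x
  have ha := h1 x
  have hb := h2 x
  simp only [neg_nonpos] at hb
  linarith

/-- For each `k ≥ 1` there is a constant `C < ∞`, uniform over `λ ∈ (0,1)`, such that: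
(i) there exists `h : ℕ → ℝ` vanishing at infinity with `(λ - 𝒮)h = δ₀ - δ_k`, and
(ii) every such `h` satisfies `|h(0) - h(k)| ≤ C`. -/
theorem resolvent_difference_bounded (k : ℕ) (hk : 1 ≤ k) :
    ∃ C : ℝ, ∀ lam : ℝ, lam ∈ Set.Ioo (0 : ℝ) 1 →
      (∃ h : ℕ → ℝ, Tendsto h atTop (nhds 0) ∧
        ∀ x : ℕ, lam * h x - walkGen h x =
          (if x = 0 then (1 : ℝ) else 0) - (if x = k then (1 : ℝ) else 0)) ∧
      (∀ h : ℕ → ℝ, Tendsto h atTop (nhds 0) →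
        (∀ x : ℕ, lam * h x - walkGen h x =
          (if x = 0 then (1 : ℝ) else 0) - (if x = k then (1 : ℝ) else 0)) →
        |h 0 - h k| ≤ C) := by
  refine ⟨3 * k, fun lam hlam => ?_⟩
  obtain ⟨hl0, hl1⟩ := hlam
  set s : ℝ := Real.sqrt (lam ^ 2 + 4 * lam) with hs
  have hD0 : 0 < lam ^ 2 + 4 * lam := by nlinarith
  have hs2 : s ^ 2 = lam ^ 2 + 4 * lam := Real.sq_sqrt (le_of_lt hD0)
  have hs0 : 0 < s := Real.sqrt_pos.mpr hD0
  have hslt : s < 2 + lam := by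
    nlinarith [hs2, hs0]
  have hsgt : lam < s := by
    nlinarith [hs2, hs0]
  set r : ℝ := (2 + lam - s) / 2 with hr
  have hr0 : 0 < r := by rw [hr]; linarith
  have hr1 : r < 1 := by rw [hr]; linarith
  have hkey : lam * r = (1 - r) ^ 2 := by
    rw [hr]; nlinarith [hs2]
  have hsol := solH_eq r lam k hk hr0 hr1 hkey
  have htend := solH_tendsto r k hr0 hr1
  refine ⟨⟨solH r k, htend, hsol⟩, fun h hht hheq => ?_⟩
  have hd : ∀ x, (h x - solH r k x) = 0 := by
    have htd : Tendsto (fun x => h x - solH r k x) atTop (nhds 0) := by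
      simpa using hht.sub htend
    apply homog_zero lam hl0 _ htd
    · intro x
      have h1 := hheq x
      have h2 := hsol x
      unfold walkGen at h1 h2 ⊢
      beta_reduce
      split_ifs at h1 h2 ⊢ <;> linarith
  have h0 : h 0 = solH r k 0 := by have := hd 0; linarith
  have hkk : h k = solH r k k := by have := hd k; linarith
  rw [h0, hkk]
  exact solH_bound r k hk hr0 hr1
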